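/- arXiv:2102.09870 — 2 statements merged into one kernel-verified Lean document; each statement's English description precedes it below -/
import Mathlib

section
/- Let p be a prime, let K be a finite extension of ℚ_p with ring of integers O_K, and let L/K be an unramified Galois extension of degree n with p not dividing n, with ring of integers O_L. Let σ be a generator of the cyclic group Gal(L/K) and let k be an integer coprime to n. Let N ⊆ O_L be the O_K-submodule generated by the set {a − σ^{jk}(a) : a ∈ O_L, 0 ≤ j ≤ n−1}. Then O_L = N ⊕ O_K as O_K-modules, where O_K ⊆ O_L is the natural inclusion. -/
/-- Let `K` be a finite extension of `ℚ_p` with ring of integers `O_K`,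
and let `L/K` be an unramified Galois extension of degree `n` with `p ∤ n`, with ring
of integers `O_L`.  Let `σ` be a generator of the cyclic group `Gal(L/K)` and `k` an
integer coprime to `n`.  Let `N ⊆ O_L` be the `O_K`-submodule generated by
`{a − σ^{jk}(a) : a ∈ O_L, 0 ≤ j ≤ n−1}` (the Galois group acting on `O_L` via
`galRestrict`).  Then `O_L = N ⊕ O_K` as `O_K`-modules, where `O_K ⊆ O_L` is the
natural inclusion. -/
theorem statement2 (p : ℕ) [Fact p.Prime]
    (K L : Type*) [Field K] [Field L]
    [Algebra ℚ_[p] K] [FiniteDimensional ℚ_[p] K]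
    [Algebra K L] [FiniteDimensional K L] [IsGalois K L]
    (n : ℕ) (hn : Module.finrank K L = n) (hpn : ¬ p ∣ n)
    -- `O_K`, the ring of integers of `K`: the integral closure of `ℤ_p` in `K`
    (OK : Type*) [CommRing OK] [IsLocalRing OK] [Algebra OK K] [IsFractionRing OK K]
    [Algebra ℤ_[p] OK] [Algebra ℤ_[p] K] [IsScalarTower ℤ_[p] ℚ_[p] K]
    [IsScalarTower ℤ_[p] OK K] [IsIntegralClosure OK ℤ_[p] K]
    -- `O_L`, the ring of integers of `L`: the integral closure of `O_K` in `L`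
    (OL : Type*) [CommRing OL] [IsLocalRing OL] [Algebra OL L]
    [Algebra OK OL] [Algebra OK L] [IsScalarTower OK OL L] [IsScalarTower OK K L]
    [IsIntegralClosure OL OK L]
    -- `L/K` is unramified: the ramification index equals `1`
    (hur : Ideal.ramificationIdx'
      (IsLocalRing.maximalIdeal OK) (IsLocalRing.maximalIdeal OL) = 1)
    -- `σ` is a generator of the (cyclic) Galois group `Gal(L/K)`
    (σ : L ≃ₐ[K] L) (hσ : ∀ τ : L ≃ₐ[K] L, τ ∈ Subgroup.zpowers σ)
    (k : ℕ) (hk : Nat.Coprime k n)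
    (N : Submodule OK OL)
    (hN : N = Submodule.span OK
      {x : OL | ∃ (a : OL) (j : ℕ), j < n ∧
        x = a - galRestrict OK K L OL (σ ^ (j * k)) a}) :
    IsCompl N (LinearMap.range (Algebra.linearMap OK OL)) := by
  classical
  have hn0 : n ≠ 0 := fun h => hpn (h ▸ dvd_zero p)
  haveI : NeZero n := ⟨hn0⟩
  -- `n` is a unit in `OK`
  have hunit : IsUnit ((n : OK)) := by
    have h1 : IsUnit ((n : ℤ_[p])) := by
      rw [PadicInt.isUnit_iff]
      refine le_antisymm (PadicInt.norm_le_one _) (not_lt.1 fun h => ?_)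
      rw [show ((n : ℤ_[p])) = (((n : ℤ)) : ℤ_[p]) by push_cast; ring] at h
      rw [PadicInt.norm_int_lt_one_iff_dvd] at h
      exact hpn (Int.ofNat_dvd.mp h)
    have h2 := h1.map (algebraMap ℤ_[p] OK)
    rwa [map_natCast] at h2
  obtain ⟨u, hu⟩ := hunit
  have hcard : Fintype.card (L ≃ₐ[K] L) = n := by
    rw [← Nat.card_eq_fintype_card, IsGalois.card_aut_eq_finrank, hn]
  have hord : orderOf σ = n := by
    rw [orderOf_eq_card_of_forall_mem_zpowers hσ, Nat.card_eq_fintype_card, hcard]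
  set G := galRestrict OK K L OL with hG
  set T : OL →ₗ[OK] OL := ∑ τ : L ≃ₐ[K] L, (G τ).toLinearMap with hT
  have hTapp : ∀ a : OL, T a = ∑ τ : L ≃ₐ[K] L, G τ a := by
    intro a
    simp [hT, LinearMap.sum_apply]
  -- every `a - τ a` lies in `N`
  have hmemN : ∀ (τ : L ≃ₐ[K] L) (a : OL), a - G τ a ∈ N := by
    intro τ a
    obtain ⟨m, hm⟩ := hσ τ
    set j : ℕ := (((m : ZMod n)) * ((k : ZMod n))⁻¹).val with hj
    have hjn : j < n := ZMod.val_lt _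
    have hk' : IsUnit ((k : ZMod n)) := (ZMod.isUnit_iff_coprime k n).2 hk
    have hτ : σ ^ (j * k) = τ := by
      rw [← hm, ← zpow_natCast]
      rw [zpow_eq_zpow_iff_modEq, hord, ← ZMod.intCast_eq_intCast_iff]
      push_cast
      rw [hj, ZMod.natCast_val, ZMod.cast_id, mul_assoc,
        ZMod.inv_mul_of_unit _ hk', mul_one]
    rw [hN]
    exact Submodule.subset_span ⟨a, j, hjn, by rw [hτ]⟩
  -- `T` is right-invariant
  have hTinv : ∀ (τ : L ≃ₐ[K] L) (a : OL), T (G τ a) = T a := by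
    intro τ a
    rw [hTapp, hTapp]
    have h1 : ∀ τ' : L ≃ₐ[K] L, G τ' (G τ a) = G (τ' * τ) a := by
      intro τ'
      rw [map_mul]
      rfl
    simp_rw [h1]
    exact Fintype.sum_bijective (· * τ) (Group.mulRight_bijective τ) _ _ fun x => rfl
  -- `T` is left-invariant
  have hTfix : ∀ (τ : L ≃ₐ[K] L) (a : OL), G τ (T a) = T a := by
    intro τ a
    rw [hTapp, map_sum]
    have h1 : ∀ τ' : L ≃ₐ[K] L, G τ (G τ' a) = G (τ * τ') a := by
      intro τ'
      rw [map_mul]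
      rfl
    simp_rw [h1]
    exact Fintype.sum_bijective (τ * ·) (Group.mulLeft_bijective τ) _ _ fun x => rfl
  -- `T` kills `N`
  have hNker : ∀ x ∈ N, T x = 0 := by
    intro x hx
    rw [hN] at hx
    induction hx using Submodule.span_induction with
    | mem x hx =>
        obtain ⟨a, j, -, rfl⟩ := hx
        rw [map_sub, hTinv, sub_self]
    | zero => exact map_zero T
    | add x y _ _ hx hy => rw [map_add, hx, hy, add_zero]
    | smul c x _ hx => rw [map_smul, hx, smul_zero]
  -- `T` on the image of `OK` is multiplication by `n`
  have hTconst : ∀ c : OK, T (algebraMap OK OL c) = (n : OK) • algebraMap OK OL c := by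
    intro c
    rw [hTapp]
    have h1 : ∀ τ : L ≃ₐ[K] L, G τ (algebraMap OK OL c) = algebraMap OK OL c := by
      intro τ
      exact AlgEquiv.commutes (G τ) c
    simp_rw [h1]
    rw [Finset.sum_const, Finset.card_univ, hcard, Nat.cast_smul_eq_nsmul]
  -- `T a` lands in the image of `OK`
  have hrange : ∀ a : OL, ∃ c : OK, algebraMap OK OL c = T a := by
    intro a
    have hmem : algebraMap OL L (T a) ∈
        IntermediateField.fixedField (⊤ : Subgroup (L ≃ₐ[K] L)) := by
      rintro ⟨τ, -⟩
      show τ (algebraMap OL L (T a)) = algebraMap OL L (T a)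
      rw [← algebraMap_galRestrict_apply OK, ← hG, hTfix]
    have hbot : IntermediateField.fixedField (⊤ : Subgroup (L ≃ₐ[K] L)) =
        (⊥ : IntermediateField K L) := by
      rw [← IntermediateField.fixingSubgroup_bot (F := K) (E := L),
        IsGalois.fixedField_fixingSubgroup]
    rw [hbot, IntermediateField.mem_bot] at hmem
    obtain ⟨c, hc⟩ := hmem
    have h1 : IsIntegral OK (algebraMap OL L (T a)) :=
      IsIntegralClosure.isIntegral_iff.mpr ⟨T a, rfl⟩
    have h2 : IsIntegral OK c := by
      rw [← isIntegral_algebraMap_iff (algebraMap K L).injective, hc]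
      exact h1
    haveI : Algebra.IsIntegral ℤ_[p] OK :=
      IsIntegralClosure.isIntegral_algebra ℤ_[p] K
    have h3 : IsIntegral ℤ_[p] c := isIntegral_trans c h2
    obtain ⟨d, hd⟩ := (IsIntegralClosure.isIntegral_iff (A := OK)).mp h3
    refine ⟨d, IsIntegralClosure.algebraMap_injective OL OK L ?_⟩
    rw [← IsScalarTower.algebraMap_apply, IsScalarTower.algebraMap_apply OK K L,
      hd, hc]
  constructor
  · -- disjointness
    rw [disjoint_iff, eq_bot_iff]
    rintro x ⟨hxN, hxR⟩
    obtain ⟨c, hc⟩ := hxR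
    have h1 : T x = 0 := hNker x hxN
    have h2 : T x = (n : OK) • x := by
      rw [← hc]
      exact hTconst c
    have h3 : (↑u : OK) • x = 0 := by
      rw [hu, ← h2, h1]
    have h4 := congrArg (fun y => (↑u⁻¹ : OK) • y) h3
    simpa [smul_smul] using h4
  · -- codisjointness
    rw [codisjoint_iff, eq_top_iff]
    intro a _
    obtain ⟨c, hc⟩ := hrange a
    have key : (↑u⁻¹ : OK) • T a ∈ LinearMap.range (Algebra.linearMap OK OL) :=
      Submodule.smul_mem _ _ ⟨c, hc⟩
    have hsum : ∑ τ : L ≃ₐ[K] L, (a - G τ a) ∈ N :=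
      Submodule.sum_mem _ fun τ _ => hmemN τ a
    have hst : ∑ τ : L ≃ₐ[K] L, (a - G τ a) = (n : OK) • a - T a := by
      rw [Finset.sum_sub_distrib, Finset.sum_const, Finset.card_univ, hcard,
        Nat.cast_smul_eq_nsmul, hTapp]
    have hmem1 : a - (↑u⁻¹ : OK) • T a ∈ N := by
      have heq : a - (↑u⁻¹ : OK) • T a = (↑u⁻¹ : OK) • ((n : OK) • a - T a) := by
        rw [smul_sub, smul_smul, ← hu, Units.inv_mul, one_smul]
      rw [heq, ← hst]
      exact Submodule.smul_mem _ _ hsum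
    have hdecomp : a = (a - (↑u⁻¹ : OK) • T a) + (↑u⁻¹ : OK) • T a := by
      ring
    rw [hdecomp]
    exact Submodule.add_mem_sup hmem1 key
end

section
/- Let 𝔽_q be a finite field of odd cardinality q with algebraic closure 𝔽̄_q. There exists a point x of the projective line ℙ¹(𝔽̄_q) (the projectivization of 𝔽̄_q²) whose stabilizer under the natural action of GL₂(𝔽_q) is exactly the subgroup of scalar matrices {λ·I : λ ∈ 𝔽_q^×}. Consequently, the image of this stabilizer under the determinant map is the subgroup of squares (𝔽_q^×)², which is a proper subgroup of 𝔽_q^× since q is odd. -/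
/-- Let `𝔽_q` be a finite field of odd cardinality `q`, with algebraic
closure `𝔽̄_q`.  There is a point of `ℙ¹(𝔽̄_q)` (here encoded by a nonzero vector
`v ∈ 𝔽̄_q²`, well defined up to scalar) whose stabilizer in `GL₂(𝔽_q)` is exactly the
scalar matrices; consequently the image of this stabilizer under the determinant is
the subgroup of squares in `𝔽_q^×`, which is proper since `q` is odd. -/
theorem statement8 (F : Type*) [Field F] [Fintype F] (hq : Odd (Fintype.card F)) :
    ∃ v : Fin 2 → AlgebraicClosure F, v ≠ 0 ∧
      (∀ g : Matrix (Fin 2) (Fin 2) F, IsUnit g →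
        ((∃ lam : AlgebraicClosure F,
            (g.map (algebraMap F (AlgebraicClosure F))).mulVec v = lam • v) ↔
          ∃ c : Fˣ, g = (c : F) • (1 : Matrix (Fin 2) (Fin 2) F))) ∧
      {d : F | ∃ g : Matrix (Fin 2) (Fin 2) F, IsUnit g ∧
          (∃ lam : AlgebraicClosure F,
            (g.map (algebraMap F (AlgebraicClosure F))).mulVec v = lam • v) ∧
          g.det = d} = {d : F | ∃ c : Fˣ, d = (c : F) ^ 2} ∧
      {d : F | ∃ c : Fˣ, d = (c : F) ^ 2} ≠ {d : F | IsUnit d} := by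
  set K := AlgebraicClosure F
  set φ := algebraMap F K with hφ
  have hinj : Function.Injective φ := (algebraMap F K).injective
  -- find α with 1, α, α² linearly independent over F
  have hBfin : (⋃ t ∈ {t : F × F × F | t ≠ 0},
      {x : K | φ t.1 + φ t.2.1 * x + φ t.2.2 * x ^ 2 = 0}).Finite := by
    apply Set.Finite.biUnion (Set.toFinite _)
    rintro ⟨a, b, c⟩ ht
    have hp : (Polynomial.C (φ a) + Polynomial.C (φ b) * Polynomial.X
        + Polynomial.C (φ c) * Polynomial.X ^ 2) ≠ 0 := by
      intro h
      apply ht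
      have h0 := congrArg (Polynomial.coeff · 0) h
      have h1 := congrArg (Polynomial.coeff · 1) h
      have h2 := congrArg (Polynomial.coeff · 2) h
      simp [Polynomial.coeff_add, Polynomial.coeff_C, Polynomial.coeff_C_mul,
        Polynomial.coeff_X, Polynomial.coeff_X_pow] at h0 h1 h2
      have ha : a = 0 := hinj (by simpa using h0)
      have hb : b = 0 := hinj (by simpa using h1)
      have hc : c = 0 := hinj (by simpa using h2)
      simp [ha, hb, hc, Prod.ext_iff]
    have := Polynomial.finite_setOf_isRoot hp
    refine this.subset ?_
    intro x hx
    simpa [Polynomial.IsRoot] using hx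
  obtain ⟨α, hα⟩ := (hBfin.infinite_compl).nonempty
  have hind : ∀ a b c : F, φ a + φ b * α + φ c * α ^ 2 = 0 → a = 0 ∧ b = 0 ∧ c = 0 := by
    intro a b c h
    by_contra hne
    exact hα (Set.mem_biUnion (show (a, b, c) ∈ {t : F × F × F | t ≠ 0} by
      simpa [Prod.ext_iff] using hne) h)
  have hmain : ∀ g : Matrix (Fin 2) (Fin 2) F, IsUnit g →
      ((∃ lam : K, (g.map φ).mulVec ![α, 1] = lam • ![α, 1]) ↔
        ∃ c : Fˣ, g = (c : F) • (1 : Matrix (Fin 2) (Fin 2) F)) := by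
    intro g hg
    constructor
    · rintro ⟨lam, h⟩
      have h0 := congrFun h 0
      have h1 := congrFun h 1
      simp [Matrix.mulVec, dotProduct, Fin.sum_univ_two, Matrix.map_apply] at h0 h1
      -- h0 : φ (g 0 0) * α + φ (g 0 1) = lam * α
      -- h1 : φ (g 1 0) * α + φ (g 1 1) = lam
      have key : φ (-(g 0 1)) + φ (g 1 1 - g 0 0) * α + φ (g 1 0) * α ^ 2 = 0 := by
        subst h1
        push_cast [map_sub, map_neg]
        ring_nf
        letI : CommRing K := inferInstanceAs (CommRing (AlgebraicClosure F))
        linear_combination -h0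
      obtain ⟨hb, hda, hc⟩ := hind _ _ _ key
      have hb' : g 0 1 = 0 := by simpa using hb
      have hda' : g 1 1 = g 0 0 := sub_eq_zero.mp hda
      have hdet : g.det = g 0 0 ^ 2 := by
        rw [Matrix.det_fin_two]; rw [hb', hda', hc]; ring
      have hunit : IsUnit (g 0 0) := by
        have := (Matrix.isUnit_iff_isUnit_det g).mp hg
        rw [hdet] at this
        exact (isUnit_pow_iff (by norm_num)).mp this
      obtain ⟨u, hu⟩ := hunit
      refine ⟨u, ?_⟩
      ext i j
      fin_cases i <;> fin_cases j <;>
        simp [hb', hda', hc, hu, Matrix.one_apply]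
    · rintro ⟨c, rfl⟩
      refine ⟨φ c, ?_⟩
      funext i
      fin_cases i <;>
        simp [Matrix.mulVec, dotProduct, Fin.sum_univ_two, Matrix.map_apply,
          Matrix.one_apply, mul_comm]
  refine ⟨![α, 1], ?_, hmain, ?_, ?_⟩
  · intro h
    have := congrFun h 1
    simp at this
  · ext d
    simp only [Set.mem_setOf_eq]
    constructor
    · rintro ⟨g, hg, hst, rfl⟩
      obtain ⟨c, rfl⟩ := (hmain g hg).mp hst
      exact ⟨c, by simp [Matrix.det_smul]⟩
    · rintro ⟨c, rfl⟩
      refine ⟨(c : F) • 1, ?_, (hmain _ ?_).mpr ⟨c, rfl⟩, by simp [Matrix.det_smul]⟩ <;>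
        exact (Matrix.isUnit_iff_isUnit_det _).mpr
          (by simpa [Matrix.det_smul] using (c.isUnit.pow 2))
  · intro h
    have hchar : ringChar F ≠ 2 := by
      intro h2
      have := FiniteField.even_card_of_char_two h2
      rw [Nat.odd_iff] at hq
      omega
    obtain ⟨a, ha⟩ := FiniteField.exists_nonsquare hchar
    have ha0 : a ≠ 0 := fun h0 => ha ⟨0, by simp [h0]⟩
    have : a ∈ {d : F | ∃ c : Fˣ, d = (c : F) ^ 2} := by
      rw [h]; exact isUnit_iff_ne_zero.mpr ha0
    obtain ⟨c, hc⟩ := this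
    exact ha ⟨c, by rw [hc]; ring⟩
end
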